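/- Consider a path v_0, v_1, ..., v_B where tokens occupy some subset of vertices and in each step every token whose successor vertex (toward v_B) will be unoccupied moves one step toward v_B, all moves simultaneous. Then the number of unoccupied vertices strictly between the foremost token and v_B never increases, and after at most B steps all tokens occupy a contiguous block of vertices ending at positions adjacent to v_B (or have reached v_B). -/

import Mathlib

/-- One synchronous step of tokens on the path `v_0,…,v_B`: every token (not yet at `v_B`)
whose successor vertex toward `v_B` is currently unoccupied moves one step toward `v_B`,
all moves simultaneous. -/
def stepFwd (B : ℕ) (S : Finset ℕ) : Finset ℕ :=
  ((S.filter (fun i => i < B ∧ i + 1 ∉ S)).image (fun i => i + 1)) ∪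
    S.filter (fun i => i = B ∨ i + 1 ∈ S)

namespace StmtAux

/-- The pointwise move map: token at `i` moves to `i+1` if allowed, else stays. -/
def fmv (B : ℕ) (S : Finset ℕ) (i : ℕ) : ℕ :=
  if i < B ∧ i + 1 ∉ S then i + 1 else i

lemma le_fmv (B : ℕ) (S : Finset ℕ) (i : ℕ) : i ≤ fmv B S i := by
  unfold fmv; split <;> omega

lemma fmv_le (B : ℕ) (S : Finset ℕ) {i : ℕ} (hi : i ≤ B) : fmv B S i ≤ B := by
  unfold fmv; split <;> omega

lemma fmv_injOn (B : ℕ) (S : Finset ℕ) : Set.InjOn (fmv B S) S := by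
  intro a ha b hb hab
  simp only [Finset.mem_coe] at ha hb
  unfold fmv at hab
  split_ifs at hab with h1 h2 h2
  · omega
  · subst hab; exact absurd hb h1.2
  · subst hab; exact absurd ha h2.2
  · exact hab

lemma step_eq_image (B : ℕ) (S : Finset ℕ) (hS : S ⊆ Finset.range (B + 1)) :
    stepFwd B S = S.image (fmv B S) := by
  ext j
  simp only [stepFwd, Finset.mem_union, Finset.mem_image, Finset.mem_filter]
  constructor
  · rintro (⟨i, ⟨hi, hc⟩, rfl⟩ | ⟨hj, hc⟩)
    · exact ⟨i, hi, by simp [fmv, hc.1, hc.2]⟩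
    · refine ⟨j, hj, ?_⟩
      have h : ¬ (j < B ∧ j + 1 ∉ S) := by
        rcases hc with h | h
        · omega
        · tauto
      simp [fmv, h]
  · rintro ⟨i, hi, rfl⟩
    by_cases h : i < B ∧ i + 1 ∉ S
    · exact Or.inl ⟨i, ⟨hi, h⟩, by simp [fmv, h]⟩
    · right
      have hiB : i ≤ B := by
        have := hS hi; simp only [Finset.mem_range] at this; omega
      have he : fmv B S i = i := by simp [fmv, h]
      rw [he]
      refine ⟨hi, ?_⟩
      push_neg at h
      by_cases hlt : i < B
      · right
        by_contra hni
        exact hni (h hlt)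
      · left; omega

lemma step_subset (B : ℕ) {S : Finset ℕ} (hS : S ⊆ Finset.range (B + 1)) :
    stepFwd B S ⊆ Finset.range (B + 1) := by
  rw [step_eq_image B S hS]
  intro j hj
  simp only [Finset.mem_image] at hj
  obtain ⟨i, hi, rfl⟩ := hj
  have := hS hi
  simp only [Finset.mem_range] at this ⊢
  have := fmv_le B S (i := i) (by omega)
  omega

lemma step_card (B : ℕ) {S : Finset ℕ} (hS : S ⊆ Finset.range (B + 1)) :
    (stepFwd B S).card = S.card := by
  rw [step_eq_image B S hS, Finset.card_image_of_injOn (fmv_injOn B S)]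

lemma count_mono (B : ℕ) {S : Finset ℕ} (hS : S ⊆ Finset.range (B + 1)) (v : ℕ) :
    (S ∩ Finset.Icc v B).card ≤ ((stepFwd B S) ∩ Finset.Icc v B).card := by
  rw [step_eq_image B S hS]
  apply Finset.card_le_card_of_injOn (fmv B S)
  · intro a ha
    simp only [Finset.mem_coe, Finset.mem_inter, Finset.mem_Icc] at ha ⊢
    refine ⟨Finset.mem_image_of_mem _ ha.1, le_trans ha.2.1 (le_fmv B S a), fmv_le B S ha.2.2⟩
  · exact (fmv_injOn B S).mono (by intro x hx; simp only [Finset.coe_inter, Set.mem_inter_iff] at hx; exact hx.1)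

lemma count_push (B : ℕ) {S : Finset ℕ} (hS : S ⊆ Finset.range (B + 1)) {v : ℕ}
    (hv1 : 1 ≤ v) (hvB : v ≤ B) (hvS : v ∉ S) :
    (S ∩ Finset.Icc (v - 1) B).card ≤ ((stepFwd B S) ∩ Finset.Icc v B).card := by
  rw [step_eq_image B S hS]
  apply Finset.card_le_card_of_injOn (fmv B S)
  · intro a ha
    simp only [Finset.mem_coe, Finset.mem_inter, Finset.mem_Icc] at ha ⊢
    refine ⟨Finset.mem_image_of_mem _ ha.1, ?_, fmv_le B S ha.2.2⟩
    by_cases hav : a = v - 1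
    · have : fmv B S a = a + 1 := by
        have : a < B ∧ a + 1 ∉ S := by constructor <;> [omega; (rw [show a + 1 = v by omega]; exact hvS)]
        simp [fmv, this]
      omega
    · have := le_fmv B S a
      omega
  · exact (fmv_injOn B S).mono (by intro x hx; simp only [Finset.coe_inter, Set.mem_inter_iff] at hx; exact hx.1)

lemma iter_subset (B : ℕ) {S : Finset ℕ} (hS : S ⊆ Finset.range (B + 1)) (t : ℕ) :
    (stepFwd B)^[t] S ⊆ Finset.range (B + 1) := by
  induction t with
  | zero => exact hS
  | succ n ih => rw [Function.iterate_succ_apply']; exact step_subset B ih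

lemma iter_card (B : ℕ) {S : Finset ℕ} (hS : S ⊆ Finset.range (B + 1)) (t : ℕ) :
    ((stepFwd B)^[t] S).card = S.card := by
  induction t with
  | zero => rfl
  | succ n ih => rw [Function.iterate_succ_apply', step_card B (iter_subset B hS n), ih]

lemma key (B : ℕ) (S : Finset ℕ) (hS : S ⊆ Finset.range (B + 1)) :
    ∀ t v k, v + k ≤ B → k + 1 ≤ (S ∩ Finset.Icc (v + k - t) B).card →
      k + 1 ≤ (((stepFwd B)^[t] S) ∩ Finset.Icc v B).card := by
  intro t
  induction t with
  | zero =>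
    intro v k hvk h
    refine le_trans h (Finset.card_le_card ?_)
    intro x hx
    simp only [Finset.mem_inter, Finset.mem_Icc] at hx ⊢
    exact ⟨hx.1, by omega, hx.2.2⟩
  | succ t ih =>
    intro v k hvk h
    set T := (stepFwd B)^[t] S with hT
    have hTsub : T ⊆ Finset.range (B + 1) := iter_subset B hS t
    rw [Function.iterate_succ_apply']
    by_cases hc : k + 1 ≤ (T ∩ Finset.Icc v B).card
    · exact le_trans hc (count_mono B hTsub v)
    · push_neg at hc
      have hv1 : 1 ≤ v := by
        by_contra hv0
        have hv : v = 0 := by omega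
        have h1 : (S ∩ Finset.Icc (v + k - (t+1)) B).card ≤ S.card :=
          Finset.card_le_card (Finset.inter_subset_left)
        have h2 : T ∩ Finset.Icc v B = T := by
          apply Finset.inter_eq_left.mpr
          intro x hx
          have := hTsub hx
          simp only [Finset.mem_range] at this
          simp only [Finset.mem_Icc]
          omega
        have := iter_card B hS t
        rw [h2, this] at hc
        omega
      -- v ∉ T
      have hvT : v ∉ T := by
        intro hvTmem
        by_cases hk : k = 0
        · subst hk
          have : v ∈ T ∩ Finset.Icc v B := by
            simp only [Finset.mem_inter, Finset.mem_Icc]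
            exact ⟨hvTmem, le_refl v, by omega⟩
          have := Finset.card_pos.mpr ⟨v, this⟩
          omega
        · -- use ih at (v+1, k-1)
          have hk1 : 1 ≤ k := by omega
          have hh : (k - 1) + 1 ≤ (S ∩ Finset.Icc ((v+1) + (k-1) - t) B).card := by
            have hsub : S ∩ Finset.Icc (v + k - (t+1)) B ⊆
                insert (v + k - (t+1)) (S ∩ Finset.Icc ((v+1) + (k-1) - t) B) := by
              intro x hx
              simp only [Finset.mem_inter, Finset.mem_Icc, Finset.mem_insert] at hx ⊢
              obtain ⟨hxS, hx1, hx2⟩ := hx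
              by_cases hxe : x = v + k - (t + 1)
              · exact Or.inl hxe
              · exact Or.inr ⟨hxS, by omega, hx2⟩
            have := Finset.card_le_card hsub
            have := Finset.card_insert_le (v + k - (t+1)) (S ∩ Finset.Icc ((v+1) + (k-1) - t) B)
            omega
          have := ih (v+1) (k-1) (by omega) hh
          -- so k ≤ |T ∩ Icc (v+1) B|, but with v ∈ T get k+1 ≤ |T ∩ Icc v B|
          have hins : insert v (T ∩ Finset.Icc (v+1) B) ⊆ T ∩ Finset.Icc v B := by
            intro x hx
            simp only [Finset.mem_insert, Finset.mem_inter, Finset.mem_Icc] at hx ⊢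
            rcases hx with rfl | hx
            · exact ⟨hvTmem, le_refl _, by omega⟩
            · exact ⟨hx.1, by omega, hx.2.2⟩
          have hcard := Finset.card_le_card hins
          rw [Finset.card_insert_of_notMem (by simp [Finset.mem_inter, Finset.mem_Icc])] at hcard
          omega
      -- now push: use ih at (v-1, k) then count_push
      have hA : k + 1 ≤ (T ∩ Finset.Icc (v-1) B).card := by
        apply ih (v-1) k (by omega)
        have : (v - 1) + k - t = v + k - (t+1) := by omega
        rw [this]
        exact h
      calc k + 1 ≤ (T ∩ Finset.Icc (v-1) B).card := hA
        _ ≤ ((stepFwd B T) ∩ Finset.Icc v B).card := count_push B hTsub hv1 (by omega) hvT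

end StmtAux

open StmtAux in
/-- The position of the foremost token never decreases (so the number of unoccupied
vertices strictly between the foremost token and `v_B` never increases), and after
`B` steps all tokens occupy the contiguous block `{B−|S|+1, …, B}` at the far end. -/
theorem stmt_7 (B : ℕ) (S : Finset ℕ) (hS : S ⊆ Finset.range (B + 1)) :
    S.max ≤ (stepFwd B S).max ∧ (stepFwd B)^[B] S = Finset.Icc (B + 1 - S.card) B := by
  constructor
  · rcases S.eq_empty_or_nonempty with rfl | hne
    · simp [stepFwd]
    · have hm : S.max' hne ∈ S := S.max'_mem hne
      have hfm : fmv B S (S.max' hne) ∈ stepFwd B S := by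
        rw [step_eq_image B S hS]; exact Finset.mem_image_of_mem _ hm
      have hTne : (stepFwd B S).Nonempty := ⟨_, hfm⟩
      rw [← Finset.coe_max' hne, ← Finset.coe_max' hTne]
      have h1 : S.max' hne ≤ fmv B S (S.max' hne) := le_fmv B S _
      have h2 : fmv B S (S.max' hne) ≤ (stepFwd B S).max' hTne := Finset.le_max' _ _ hfm
      exact_mod_cast le_trans h1 h2
  · set n := S.card with hn
    have hXcard : ((stepFwd B)^[B] S).card = n := iter_card B hS B
    have hXsub : (stepFwd B)^[B] S ⊆ Finset.range (B + 1) := iter_subset B hS B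
    rcases Nat.eq_zero_or_pos n with h0 | hpos
    · have : S = ∅ := Finset.card_eq_zero.mp h0
      subst this
      have hstep : stepFwd B ∅ = ∅ := by simp [stepFwd]
      rw [Function.iterate_fixed hstep B]
      rw [hn] at h0 ⊢
      simp only [Finset.card_empty]
      rw [Finset.Icc_eq_empty (by omega)]
    · have hnB : n ≤ B + 1 := by
        have := Finset.card_le_card hS
        simpa [Finset.card_range] using this
      have hkey := key B S hS B (B - (n-1)) (n-1) (by omega) ?_
      · -- Icc (B-(n-1)) B ⊆ X
        have hIcard : (Finset.Icc (B - (n-1)) B).card = n := by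
          rw [Nat.card_Icc]; omega
        have hsub : ((stepFwd B)^[B] S) ∩ Finset.Icc (B - (n-1)) B ⊆ Finset.Icc (B - (n-1)) B :=
          Finset.inter_subset_right
        have heq : ((stepFwd B)^[B] S) ∩ Finset.Icc (B - (n-1)) B = Finset.Icc (B - (n-1)) B := by
          apply Finset.eq_of_subset_of_card_le hsub
          rw [hIcard]; omega
        have hsubI : Finset.Icc (B - (n-1)) B ⊆ (stepFwd B)^[B] S := by
          rw [← heq]; exact Finset.inter_subset_left
        have hfin : Finset.Icc (B - (n-1)) B = (stepFwd B)^[B] S := by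
          apply Finset.eq_of_subset_of_card_le hsubI
          rw [hXcard, hIcard]
        rw [show B + 1 - n = B - (n-1) by omega]
        exact hfin.symm
      · -- hypothesis: n ≤ |S ∩ Icc 0 B| with 0 = B-(n-1)+(n-1)-B
        have h0 : B - (n-1) + (n-1) - B = 0 := by omega
        rw [h0]
        have : S ∩ Finset.Icc 0 B = S := by
          apply Finset.inter_eq_left.mpr
          intro x hx
          have := hS hx
          simp only [Finset.mem_range] at this
          simp only [Finset.mem_Icc]
          omega
        rw [this]
        omega
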